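/- Let G be a graph with a list assignment L, and let v, w be twin vertices of G (i.e., N[v] = N[w]). Then ρ(v) ≠ ρ(w) for every star L-coloring of G and for every biclique L-coloring of G. -/

import Mathlib

variable {V : Type*}

/-- A set of vertices is monochromatic under the coloring `ρ`. -/
def Mono (ρ : V → ℕ) (W : Set V) : Prop := ∀ x ∈ W, ∀ y ∈ W, ρ x = ρ y

/-- `S` is an independent set of `G`. -/
def IndepSet (G : SimpleGraph V) (S : Set V) : Prop := ∀ x ∈ S, ∀ y ∈ S, ¬G.Adj x y

/-- `W` is a star of `G` with center `v` (it induces a `K_{1,m}` with `m ≥ 1`). -/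
def IsStarC (G : SimpleGraph V) (v : V) (W : Set V) : Prop :=
  v ∈ W ∧ (W \ {v}).Nonempty ∧ (∀ u ∈ W \ {v}, G.Adj v u) ∧ IndepSet G (W \ {v})

/-- `W` is a star of `G`. -/
def IsStar (G : SimpleGraph V) (W : Set V) : Prop := ∃ v, IsStarC G v W

/-- `W` is a maximal star of `G`. -/
def IsMaxStar (G : SimpleGraph V) (W : Set V) : Prop :=
  IsStar G W ∧ ∀ W', IsStar G W' → W ⊆ W' → W' = W

/-- `W` is a biclique of `G` (it induces a complete bipartite graph). -/
def IsBiclique (G : SimpleGraph V) (W : Set V) : Prop :=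
  ∃ S T : Set V, S.Nonempty ∧ T.Nonempty ∧ Disjoint S T ∧ S ∪ T = W ∧
    (∀ s ∈ S, ∀ t ∈ T, G.Adj s t) ∧ IndepSet G S ∧ IndepSet G T

/-- `W` is a maximal biclique of `G`. -/
def IsMaxBiclique (G : SimpleGraph V) (W : Set V) : Prop :=
  IsBiclique G W ∧ ∀ W', IsBiclique G W' → W ⊆ W' → W' = W

/-- A star coloring: no maximal star is monochromatic. -/
def StarColoring (G : SimpleGraph V) (ρ : V → ℕ) : Prop :=
  ∀ W, IsMaxStar G W → ¬Mono ρ W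

/-- A biclique coloring: no maximal biclique is monochromatic. -/
def BicliqueColoring (G : SimpleGraph V) (ρ : V → ℕ) : Prop :=
  ∀ W, IsMaxBiclique G W → ¬Mono ρ W

/-- A star `k`-coloring uses colors `{1, …, k}`. -/
def StarKColoring (G : SimpleGraph V) (k : ℕ) (ρ : V → ℕ) : Prop :=
  (∀ x, ρ x ∈ Set.Icc 1 k) ∧ StarColoring G ρ

/-- A biclique `k`-coloring uses colors `{1, …, k}`. -/
def BicliqueKColoring (G : SimpleGraph V) (k : ℕ) (ρ : V → ℕ) : Prop :=
  (∀ x, ρ x ∈ Set.Icc 1 k) ∧ BicliqueColoring G ρ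

/-- A `k`-list assignment: each vertex gets a list of exactly `k` colors. -/
def IsListAssignment (L : V → Set ℕ) (k : ℕ) : Prop := ∀ v, (L v).Finite ∧ (L v).ncard = k

/-- An `L`-coloring: each vertex gets a color from its own list. -/
def IsLColoring (L : V → Set ℕ) (ρ : V → ℕ) : Prop := ∀ v, ρ v ∈ L v

/-- `G` is star `k`-choosable. -/
def StarChoosable (G : SimpleGraph V) (k : ℕ) : Prop :=
  ∀ L : V → Set ℕ, IsListAssignment L k → ∃ ρ, IsLColoring L ρ ∧ StarColoring G ρ

/-- `G` is biclique `k`-choosable. -/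
def BicliqueChoosable (G : SimpleGraph V) (k : ℕ) : Prop :=
  ∀ L : V → Set ℕ, IsListAssignment L k → ∃ ρ, IsLColoring L ρ ∧ BicliqueColoring G ρ

/-- The star chromatic number `χ_S`. -/
noncomputable def starChromaticNumber (G : SimpleGraph V) : ℕ :=
  sInf {k | ∃ ρ, StarKColoring G k ρ}

/-- The biclique chromatic number `χ_B`. -/
noncomputable def bicliqueChromaticNumber (G : SimpleGraph V) : ℕ :=
  sInf {k | ∃ ρ, BicliqueKColoring G k ρ}

/-- The star choice number `ch_S`. -/
noncomputable def starChoiceNumber (G : SimpleGraph V) : ℕ := sInf {k | StarChoosable G k}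

/-- The biclique choice number `ch_B`. -/
noncomputable def bicliqueChoiceNumber (G : SimpleGraph V) : ℕ := sInf {k | BicliqueChoosable G k}

/-- `l` is a leaf (degree-one vertex) whose unique neighbor is `v`. -/
def IsLeafAt (G : SimpleGraph V) (l v : V) : Prop := G.neighborSet l = {v}

/-- `v` is a leafed vertex: some leaf is adjacent to it. -/
def IsLeafed (G : SimpleGraph V) (v : V) : Prop := ∃ l, IsLeafAt G l v

/-- `S` induces a cycle `C_n` in `G`. -/
def IsInducedCycle (G : SimpleGraph V) (n : ℕ) (S : Set V) : Prop :=
  ∃ f : ZMod n → V, Function.Injective f ∧ Set.range f = S ∧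
    ∀ i j : ZMod n, G.Adj (f i) (f j) ↔ (j = i + 1 ∨ i = j + 1)

/-- `S` induces a hole (chordless cycle of length at least 4) in `G`. -/
def IsHole (G : SimpleGraph V) (S : Set V) : Prop := ∃ n, 4 ≤ n ∧ IsInducedCycle G n S

/-- `S` induces a complete graph `K_m` in `G`. -/
def IsInducedComplete (G : SimpleGraph V) (m : ℕ) (S : Set V) : Prop :=
  G.IsClique S ∧ S.Finite ∧ S.ncard = m

/-- The closed neighborhood `N[v]`. -/
def closedNbhd (G : SimpleGraph V) (v : V) : Set V := insert v (G.neighborSet v)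

/-- `v` and `w` are twins: `N[v] = N[w]`. -/
def Twins (G : SimpleGraph V) (v w : V) : Prop := closedNbhd G v = closedNbhd G w

/-- `w` and `z` are twins in the subgraph of `G` induced by `A`. -/
def TwinsIn (G : SimpleGraph V) (A : Set V) (w z : V) : Prop :=
  ∀ y ∈ A, ((y = w ∨ G.Adj y w) ↔ (y = z ∨ G.Adj y z))

/-- `w` dominates `v`: `N[v] ⊆ N[w]`. -/
def Dominates (G : SimpleGraph V) (w v : V) : Prop := closedNbhd G v ⊆ closedNbhd G w

/-- `K` is a `k`-keeper connecting `v` and `w`. -/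
def IsKeeper (G : SimpleGraph V) (k : ℕ) (v w : V) (K : Set V) : Prop :=
  v ∉ K ∧ w ∉ K ∧
  ∃ (d : Fin (k - 1) → V) (C : Fin (k - 1) → Set V),
    Function.Injective d ∧
    (∀ i, (C i).Finite ∧ (C i).ncard = k) ∧
    (∀ i j, d i ∉ C j) ∧
    (∀ i j, i ≠ j → Disjoint (C i) (C j)) ∧
    K = Set.range d ∪ ⋃ i, C i ∧
    G.IsClique (Set.range d ∪ {v, w}) ∧
    (∀ i, G.IsClique (insert (d i) (C i))) ∧
    (∀ x ∈ K, ∀ y, G.Adj x y →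
      (x ∈ Set.range d ∧ y ∈ Set.range d ∪ {v, w}) ∨
      (∃ i, x ∈ insert (d i) (C i) ∧ y ∈ insert (d i) (C i)))

/-- `C` is a `k`-switcher connecting `U`. -/
def IsSwitcher (G : SimpleGraph V) (k : ℕ) (U C : Set V) : Prop :=
  Disjoint C U ∧ C.Finite ∧ C.ncard = k ∧
  (∀ u ∈ U, G.IsClique (insert u C)) ∧
  (∀ x ∈ C, ∀ y, G.Adj x y → y ∈ C ∪ U)

/-- `S` is a long `k`-switcher connecting `W`. -/
def IsLongSwitcher (G : SimpleGraph V) (k : ℕ) (W S : Set V) : Prop :=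
  ∃ (h : ℕ) (w u : ℕ → V) (C : Set V) (Q : ℕ → Set V),
    2 ≤ h ∧
    Set.InjOn w (Set.Icc 1 h) ∧ w '' Set.Icc 1 h = W ∧
    Set.InjOn u (Set.Icc 1 h) ∧
    (∀ i ∈ Set.Icc 1 h, IsLeafed G (u i)) ∧
    IndepSet G (u '' Set.Icc 1 h) ∧
    IsSwitcher G k (u '' Set.Icc 1 h) C ∧
    (∀ i ∈ Set.Icc 1 h, IsKeeper G k (w i) (u i) (Q i)) ∧
    S = u '' Set.Icc 1 h ∪ C ∪ ⋃ i ∈ Set.Icc 1 h, Q i ∧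
    Disjoint (u '' Set.Icc 1 h) C ∧
    (∀ i ∈ Set.Icc 1 h, Disjoint (u '' Set.Icc 1 h) (Q i)) ∧
    (∀ i ∈ Set.Icc 1 h, Disjoint C (Q i)) ∧
    (∀ i ∈ Set.Icc 1 h, ∀ j ∈ Set.Icc 1 h, i ≠ j → Disjoint (Q i) (Q j)) ∧
    Disjoint S W ∧
    (∀ i ∈ Set.Icc 1 h, ∀ y, G.Adj (u i) y → y ∈ C ∪ Q i ∨ IsLeafAt G y (u i))

/-- `K` is an `ℓ`-cluster connecting `⟨s, X, −X⟩`, where `X = range x` and `−X = range mx`. -/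
def IsCluster (G : SimpleGraph V) (ℓ : ℕ) (s : V) (x mx : ZMod ℓ → V) (K : Set V) : Prop :=
  2 ≤ ℓ ∧
  ∃ vc : ZMod ℓ → V,
    Function.Injective x ∧ Function.Injective mx ∧ Function.Injective vc ∧
    Set.range vc = K ∧
    Disjoint (Set.range x) (Set.range mx) ∧
    Disjoint (Set.range x) K ∧ Disjoint (Set.range mx) K ∧
    s ∉ Set.range x ∪ Set.range mx ∪ K ∧
    (∀ i, IsLeafed G (vc i)) ∧
    (∀ i, G.Adj s (x i)) ∧ (∀ i, G.Adj s (mx i)) ∧ (∀ i, G.Adj s (vc i)) ∧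
    (∀ i, G.Adj (x i) (mx i)) ∧ (∀ i, G.Adj (mx i) (vc i)) ∧ (∀ i, G.Adj (vc i) (x (i + 1))) ∧
    (∀ i j, ¬G.Adj (x i) (x j)) ∧ (∀ i j, ¬G.Adj (mx i) (mx j)) ∧
    (∀ i j, ¬G.Adj (vc i) (vc j)) ∧
    (∀ i j, G.Adj (x i) (mx j) → i = j) ∧
    (∀ i j, G.Adj (mx i) (vc j) → i = j) ∧
    (∀ i j, G.Adj (vc i) (x j) → j = i + 1) ∧
    (∀ i, ∀ y, G.Adj (vc i) y → y = s ∨ y = mx i ∨ y = x (i + 1) ∨ IsLeafAt G y (vc i))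

/-- `S` is a list switcher connecting `W`. -/
def IsListSwitcher (G : SimpleGraph V) (W S : Set V) : Prop :=
  ∃ (h : ℕ) (w u : ℕ → V) (C : Set V),
    2 ≤ h ∧
    Set.InjOn w (Set.Icc 1 h) ∧ w '' Set.Icc 1 h = W ∧
    Set.InjOn u (Set.Icc 1 h) ∧
    IndepSet G (u '' Set.Icc 1 h) ∧
    IsSwitcher G 2 (u '' Set.Icc 1 h) C ∧
    S = u '' Set.Icc 1 h ∪ C ∧
    Disjoint (u '' Set.Icc 1 h) C ∧
    Disjoint S W ∧
    (∀ i ∈ Set.Icc 1 h, G.Adj (w i) (u i)) ∧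
    (∀ i ∈ Set.Icc 1 h, ∀ y, G.Adj (u i) y → y ∈ C ∨ y = w i)

/-- `F` is a `k`-forcer connecting `v`. -/
def IsForcer (G : SimpleGraph V) (k : ℕ) (v : V) (F : Set V) : Prop :=
  ∃ (A B : Set V) (C : V → V → Set V),
    A.Finite ∧ A.ncard = k - 1 ∧ B.Finite ∧ B.ncard = k ^ k - 1 ∧
    (∀ a ∈ A, IsLeafed G a) ∧ (∀ b ∈ B, IsLeafed G b) ∧
    v ∉ A ∧ v ∉ B ∧ Disjoint A B ∧
    (∀ a ∈ insert v A, ∀ b ∈ B, ¬G.Adj a b ∧ IsSwitcher G k {a, b} (C a b)) ∧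
    (∀ a ∈ insert v A, ∀ b ∈ B, ∀ a' ∈ insert v A, ∀ b' ∈ B,
      (a ≠ a' ∨ b ≠ b') → Disjoint (C a b) (C a' b')) ∧
    (∀ a ∈ insert v A, ∀ b ∈ B, Disjoint (C a b) (insert v (A ∪ B))) ∧
    F = A ∪ B ∪ ⋃ a ∈ insert v A, ⋃ b ∈ B, C a b ∧
    (∀ x ∈ A ∪ B, ∀ y, G.Adj x y →
      (∃ a ∈ insert v A, ∃ b ∈ B, (x = a ∨ x = b) ∧ y ∈ C a b) ∨ IsLeafAt G y x)

/-- Given a `k`-forcer `F` connecting `v` and a list assignment `L`, the color `c` is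
`L`-admissible for `v`. -/
def LAdmissible (G : SimpleGraph V) (F : Set V) (L : V → Set ℕ) (v : V) (c : ℕ) : Prop :=
  c ∈ L v ∧ ∃ ρ : V → ℕ, IsLColoring L ρ ∧ ρ v = c ∧
    ∀ f ∈ F, ∀ W, IsMaxStar G W → IsStarC G f W → ¬Mono ρ W

/-- The vertices `a, b, c, d` induce a diamond with universal vertices `a, b`. -/
def IsInducedDiamond (G : SimpleGraph V) (a b c d : V) : Prop :=
  a ≠ b ∧ a ≠ c ∧ a ≠ d ∧ b ≠ c ∧ b ≠ d ∧ c ≠ d ∧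
  G.Adj a b ∧ G.Adj a c ∧ G.Adj a d ∧ G.Adj b c ∧ G.Adj b d ∧ ¬G.Adj c d

/-- `G` contains an induced 4-wheel `W_4`. -/
def HasInducedW4 (G : SimpleGraph V) : Prop :=
  ∃ u a b c d : V, [u, a, b, c, d].Pairwise (· ≠ ·) ∧
    G.Adj u a ∧ G.Adj u b ∧ G.Adj u c ∧ G.Adj u d ∧
    G.Adj a b ∧ G.Adj b c ∧ G.Adj c d ∧ G.Adj d a ∧ ¬G.Adj a c ∧ ¬G.Adj b d

/-- `G` contains an induced dart. -/
def HasInducedDart (G : SimpleGraph V) : Prop :=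
  ∃ a b c d e : V, [a, b, c, d, e].Pairwise (· ≠ ·) ∧
    IsInducedDiamond G a b c d ∧ G.Adj a e ∧ ¬G.Adj b e ∧ ¬G.Adj c e ∧ ¬G.Adj d e

/-- `G` contains an induced gem. -/
def HasInducedGem (G : SimpleGraph V) : Prop :=
  ∃ u p₁ p₂ p₃ p₄ : V, [u, p₁, p₂, p₃, p₄].Pairwise (· ≠ ·) ∧
    G.Adj u p₁ ∧ G.Adj u p₂ ∧ G.Adj u p₃ ∧ G.Adj u p₄ ∧
    G.Adj p₁ p₂ ∧ G.Adj p₂ p₃ ∧ G.Adj p₃ p₄ ∧ ¬G.Adj p₁ p₃ ∧ ¬G.Adj p₁ p₄ ∧ ¬G.Adj p₂ p₄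

/-- `v` is block separable. -/
def BlockSeparable (G : SimpleGraph V) (v : V) : Prop :=
  ∀ w ∈ G.neighborSet v, ∀ z ∈ G.neighborSet v, G.Adj w z →
    ¬Dominates G w v → ¬Dominates G z v → TwinsIn G (closedNbhd G v) w z

/-- `B` is a block (a maximal set of pairwise twins) of the subgraph of `G` induced by `A`. -/
def IsBlockOf (G : SimpleGraph V) (A B : Set V) : Prop :=
  B ⊆ A ∧ B.Nonempty ∧ (∀ p ∈ B, ∀ q ∈ B, TwinsIn G A p q) ∧
  ∀ B', B' ⊆ A → (∀ p ∈ B', ∀ q ∈ B', TwinsIn G A p q) → B ⊆ B' → B' = B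

/-- `B` is a block of `G`. -/
def IsBlock (G : SimpleGraph V) (B : Set V) : Prop := IsBlockOf G Set.univ B

/-- `B 0, …, B ℓ` is the block separation of `v`. -/
def IsBlockSeparation (G : SimpleGraph V) (v : V) (ℓ : ℕ) (B : ℕ → Set V) : Prop :=
  v ∈ B 0 ∧
  (∀ i ≤ ℓ, IsBlockOf G (closedNbhd G v) (B i)) ∧
  (∀ i ≤ ℓ, ∀ j ≤ ℓ, i ≠ j → Disjoint (B i) (B j)) ∧
  (⋃ i ∈ Set.Iic ℓ, B i) = closedNbhd G v ∧
  (∀ i, 1 ≤ i → i ≤ ℓ → ∀ j, 1 ≤ j → j ≤ ℓ → i ≠ j → ∀ a ∈ B i, ∀ b ∈ B j, ¬G.Adj a b)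

/-- `S` is a diamond `k`-switcher connecting `U`. -/
def IsDiamondSwitcher (G : SimpleGraph V) (k : ℕ) (U S : Set V) : Prop :=
  ∃ (h : ℕ) (u w : ℕ → V) (Q : ℕ → Set V) (C : Set V),
    2 ≤ h ∧
    Set.InjOn u (Set.Icc 1 h) ∧ u '' Set.Icc 1 h = U ∧
    Set.InjOn w (Set.Icc 1 h) ∧
    (∀ i, 2 ≤ i → i ≤ h → IsLeafed G (w i)) ∧
    C.Finite ∧ C.ncard = k ∧
    G.IsClique (insert (w 1) C) ∧
    (∀ i, 2 ≤ i → i ≤ h → G.Adj (w 1) (w i)) ∧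
    (∀ i j, 2 ≤ i → i ≤ h → 2 ≤ j → j ≤ h → ¬G.Adj (w i) (w j)) ∧
    (∀ i ∈ Set.Icc 1 h, IsKeeper G k (u i) (w i) (Q i)) ∧
    S = w '' Set.Icc 1 h ∪ C ∪ ⋃ i ∈ Set.Icc 1 h, Q i ∧
    Disjoint (w '' Set.Icc 1 h) C ∧
    (∀ i ∈ Set.Icc 1 h, Disjoint (w '' Set.Icc 1 h) (Q i)) ∧
    (∀ i ∈ Set.Icc 1 h, Disjoint C (Q i)) ∧
    (∀ i ∈ Set.Icc 1 h, ∀ j ∈ Set.Icc 1 h, i ≠ j → Disjoint (Q i) (Q j)) ∧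
    Disjoint S U ∧
    (∀ y, G.Adj (w 1) y → y ∈ C ∨ (∃ i, 2 ≤ i ∧ i ≤ h ∧ y = w i) ∨ y ∈ Q 1) ∧
    (∀ i, 2 ≤ i → i ≤ h → ∀ y, G.Adj (w i) y → y = w 1 ∨ y ∈ Q i ∨ IsLeafAt G y (w i)) ∧
    (∀ x ∈ C, ∀ y, G.Adj x y → y ∈ C ∨ y = w 1)

/-- `S` is a split `k`-switcher connecting `W`, with respect to the split partition
`(Sg, Qg)` of `G`. -/
def IsSplitSwitcher (G : SimpleGraph V) (Sg Qg : Set V) (k : ℕ) (W S : Set V) : Prop :=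
  ∃ (X Y : Set V) (a₁ a₂ : V),
    X ⊆ Qg ∧ Y ⊆ Qg ∧ a₁ ∈ Sg ∧ a₂ ∈ Sg ∧ a₁ ≠ a₂ ∧
    X.Finite ∧ X.ncard = k ∧ Y.Finite ∧ Y.ncard = k ∧ Disjoint X Y ∧
    a₁ ∉ X ∪ Y ∧ a₂ ∉ X ∪ Y ∧
    S = X ∪ Y ∪ {a₁, a₂} ∧ Disjoint S W ∧
    (∀ v ∈ W ∪ {a₁, a₂}, G.IsClique (insert v X)) ∧
    G.IsClique (insert a₁ Y) ∧ G.IsClique (insert a₂ Y) ∧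
    (∀ x ∈ X ∪ Y, ∀ y ∈ Sg, G.Adj x y →
      ((x ∈ X ∧ (y ∈ W ∨ y = a₁ ∨ y = a₂)) ∨ (x ∈ Y ∧ (y = a₁ ∨ y = a₂)))) ∧
    (∀ y, G.Adj a₁ y → y ∈ X ∪ Y) ∧
    (∀ y, G.Adj a₂ y → y ∈ X ∪ Y)

/-- `G` together with the vertex partition `QB 1, …, QB (r+1), SB 1, …, SB r` realizes the
threshold representation `(q, s)`. -/
def IsThresholdRealization (G : SimpleGraph V) (r : ℕ) (q s : ℕ → ℕ)
    (QB SB : ℕ → Set V) : Prop :=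
  (∀ i ∈ Set.Icc 1 (r + 1), (QB i).Finite ∧ (QB i).ncard = q i) ∧
  (∀ i ∈ Set.Icc 1 r, (SB i).Finite ∧ (SB i).ncard = s i) ∧
  (∀ i ∈ Set.Icc 1 (r + 1), ∀ j ∈ Set.Icc 1 (r + 1), i ≠ j → Disjoint (QB i) (QB j)) ∧
  (∀ i ∈ Set.Icc 1 r, ∀ j ∈ Set.Icc 1 r, i ≠ j → Disjoint (SB i) (SB j)) ∧
  (∀ i ∈ Set.Icc 1 (r + 1), ∀ j ∈ Set.Icc 1 r, Disjoint (QB i) (SB j)) ∧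
  ((⋃ i ∈ Set.Icc 1 (r + 1), QB i) ∪ ⋃ i ∈ Set.Icc 1 r, SB i) = Set.univ ∧
  (∀ a b : V, G.Adj a b ↔ a ≠ b ∧
    ((∃ i ∈ Set.Icc 1 (r + 1), ∃ j ∈ Set.Icc 1 (r + 1),
        ((a ∈ QB i ∧ b ∈ QB j) ∨ (b ∈ QB i ∧ a ∈ QB j))) ∨
     (∃ i ∈ Set.Icc 1 r, ∃ j ∈ Set.Icc 1 r, i ≤ j ∧
        ((a ∈ QB i ∧ b ∈ SB j) ∨ (b ∈ QB i ∧ a ∈ SB j)))))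

/-- The index `i` of `Q` is `k`-forbidden for the threshold representation `(q, s)`. -/
def KForbiddenIndex (k r : ℕ) (q s : ℕ → ℕ) (i : ℕ) : Prop :=
  k < q i ∨ (q i = k ∧ ∃ j, i < j ∧ j ≤ r + 1 ∧ q j = k ∧
    (∀ h, i < h → h < j → q h = k - 1) ∧ ∀ h, i ≤ h → h < j → s h = 1)

/-- `G` realizes the netblock representation `(T, wt)`, where `VT` is the vertex set of the
tree `T` and `B v w` is the clique inserted for the tree edge `vw`. -/
def IsNetblockRealization (G T : SimpleGraph V) (VT : Set V)
    (wt : V → V → ℕ) (B : V → V → Set V) : Prop :=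
  (∀ v w, T.Adj v w → v ∈ VT ∧ w ∈ VT) ∧
  (T.induce VT).IsTree ∧
  (∀ v w, wt v w = wt w v) ∧
  (∀ v w, B v w = B w v) ∧
  (∀ v w, T.Adj v w → (B v w).Finite ∧ (B v w).ncard = wt v w) ∧
  (∀ v w, T.Adj v w → Disjoint (B v w) VT) ∧
  (∀ v w v' w', T.Adj v w → T.Adj v' w' → ¬(v = v' ∧ w = w') → ¬(v = w' ∧ w = v') →
    Disjoint (B v w) (B v' w')) ∧
  {a | a ∈ VT ∨ ∃ v w, T.Adj v w ∧ a ∈ B v w} = Set.univ ∧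
  (∀ a b, G.Adj a b ↔ a ≠ b ∧ ∃ v w, T.Adj v w ∧
    a ∈ insert v (insert w (B v w)) ∧ b ∈ insert v (insert w (B v w)))

/-- `R` is the vertex set of a `k`-subtree of the netblock representation `(T, wt)`. -/
def IsKSubtree (T : SimpleGraph V) (VT : Set V) (wt : V → V → ℕ) (k : ℕ) (R : Set V) : Prop :=
  R ⊆ VT ∧ R.Nonempty ∧ (T.induce R).Connected ∧
  ∀ v ∈ R, ∀ w ∈ R, T.Adj v w → wt v w = k

/-- `R` is the vertex set of a maximal `k`-subtree of `(T, wt)`: its edge set is not properly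
included in the edge set of another `k`-subtree. -/
def IsMaxKSubtree (T : SimpleGraph V) (VT : Set V) (wt : V → V → ℕ) (k : ℕ) (R : Set V) :
    Prop :=
  IsKSubtree T VT wt k R ∧
  ∀ R', IsKSubtree T VT wt k R' →
    (∀ v ∈ R, ∀ w ∈ R, T.Adj v w → v ∈ R' ∧ w ∈ R') →
    (∀ v ∈ R', ∀ w ∈ R', T.Adj v w → v ∈ R ∧ w ∈ R)

/-- `v` is a `k`-exit vertex of `(T, wt)`. -/
def IsExitVertex (T : SimpleGraph V) (wt : V → V → ℕ) (k : ℕ) (v : V) : Prop :=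
  ∃ w, T.Adj v w ∧ wt v w < k

/-- Twin vertices receive distinct colors in any star `L`-coloring and in any
biclique `L`-coloring. -/
theorem twins_get_distinct_colors (G : SimpleGraph V) (L : V → Set ℕ) (v w : V)
    (hvw : v ≠ w) (htwins : Twins G v w) (ρ : V → ℕ) (hρ : IsLColoring L ρ) :
    (StarColoring G ρ → ρ v ≠ ρ w) ∧ (BicliqueColoring G ρ → ρ v ≠ ρ w) := by
  -- twin characterization
  have htw : ∀ u, (u = v ∨ G.Adj v u) ↔ (u = w ∨ G.Adj w u) := by
    intro u
    have h := Set.ext_iff.mp htwins u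
    simpa [closedNbhd, SimpleGraph.mem_neighborSet, Set.mem_insert_iff, eq_comm] using h
  have hadj : G.Adj v w := by
    rcases (htw w).mpr (Or.inl rfl) with h | h
    · exact absurd h.symm hvw
    · exact h
  -- any star containing v and w is exactly {v, w}
  have hstar_sub : ∀ W', IsStar G W' → v ∈ W' → w ∈ W' → W' = {v, w} := by
    rintro W' ⟨c, hcW, -, hcadj, hind⟩ hvW hwW
    have hc : c = v ∨ c = w := by
      by_contra hc
      push_neg at hc
      exact hind v ⟨hvW, fun h => hc.1 (h.symm ▸ rfl)⟩ w
        ⟨hwW, fun h => hc.2 (h.symm ▸ rfl)⟩ hadj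
    apply Set.Subset.antisymm
    · intro u hu
      by_contra hu2
      simp only [Set.mem_insert_iff, Set.mem_singleton_iff, not_or] at hu2
      rcases hc with h | h <;> subst h
      · have h1 : G.Adj c u := hcadj u ⟨hu, hu2.1⟩
        rcases (htw u).mp (Or.inr h1) with h | h
        · exact hu2.2 h
        · exact hind w ⟨hwW, fun h' => hvw h'.symm⟩ u ⟨hu, hu2.1⟩ h
      · have h1 : G.Adj c u := hcadj u ⟨hu, hu2.2⟩
        rcases (htw u).mpr (Or.inr h1) with h | h
        · exact hu2.1 h
        · exact hind v ⟨hvW, fun h' => hvw h'⟩ u ⟨hu, hu2.2⟩ h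
    · intro u hu
      rcases hu with rfl | hu
      · exact hvW
      · exact hu.symm ▸ hwW
  have hmaxstar : IsMaxStar G {v, w} := by
    constructor
    · refine ⟨v, Set.mem_insert _ _, ⟨w, ?_⟩, ?_, ?_⟩
      · exact ⟨Or.inr rfl, fun h => hvw h.symm⟩
      · rintro u ⟨hu, hu2⟩
        rcases hu with rfl | hu
        · exact absurd rfl hu2
        · exact hu.symm ▸ hadj
      · rintro x ⟨hx, hx2⟩ y ⟨hy, hy2⟩
        rcases hx with rfl | hx
        · exact absurd rfl hx2
        · rcases hy with rfl | hy
          · exact absurd rfl hy2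
          · rw [Set.mem_singleton_iff] at hx hy
            subst hx; subst hy
            exact fun h => G.loopless.irrefl _ h
    · intro W' hW' hsub
      exact hstar_sub W' hW' (hsub (Or.inl rfl)) (hsub (Or.inr rfl))
  -- any biclique containing v and w is exactly {v, w}
  have hbic_sub : ∀ W', IsBiclique G W' → v ∈ W' → w ∈ W' → W' = {v, w} := by
    rintro W' ⟨S, T, -, -, -, hST, hcross, hiS, hiT⟩ hvW hwW
    -- a symmetric helper
    have key : ∀ (S T : Set V) (a b : V), a ∈ S → b ∈ T →
        (∀ s ∈ S, ∀ t ∈ T, G.Adj s t) → IndepSet G S → IndepSet G T →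
        (∀ u, (u = a ∨ G.Adj a u) ↔ (u = b ∨ G.Adj b u)) →
        S ⊆ {a} ∧ T ⊆ {b} := by
      intro S T a b haS hbT hcr hiS hiT htab
      constructor
      · intro u hu
        by_contra hne
        simp only [Set.mem_singleton_iff] at hne
        have h1 : G.Adj u b := hcr u hu b hbT
        rcases (htab u).mpr (Or.inr h1.symm) with h | h
        · exact hne h
        · exact hiS a haS u hu h
      · intro u hu
        by_contra hne
        simp only [Set.mem_singleton_iff] at hne
        have h1 : G.Adj a u := hcr a haS u hu
        rcases (htab u).mp (Or.inr h1) with h | h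
        · exact hne h
        · exact hiT b hbT u hu h
    have hv' : v ∈ S ∪ T := hST ▸ hvW
    have hw' : w ∈ S ∪ T := hST ▸ hwW
    have hmain : W' ⊆ {v, w} := by
      rcases hv' with hvS | hvT <;> rcases hw' with hwS | hwT
      · exact absurd hadj (hiS v hvS w hwS)
      · obtain ⟨h1, h2⟩ := key S T v w hvS hwT hcross hiS hiT htw
        rw [← hST]
        rintro u (hu | hu)
        · exact Or.inl (h1 hu)
        · exact Or.inr (h2 hu)
      · have htw' : ∀ u, (u = w ∨ G.Adj w u) ↔ (u = v ∨ G.Adj v u) :=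
          fun u => (htw u).symm
        obtain ⟨h1, h2⟩ := key S T w v hwS hvT hcross hiS hiT htw'
        rw [← hST]
        rintro u (hu | hu)
        · exact Or.inr (h1 hu)
        · exact Or.inl (h2 hu)
      · exact absurd hadj (hiT v hvT w hwT)
    apply Set.Subset.antisymm hmain
    rintro u (rfl | hu)
    · exact hvW
    · exact hu.symm ▸ hwW
  have hmaxbic : IsMaxBiclique G {v, w} := by
    constructor
    · refine ⟨{v}, {w}, ⟨v, rfl⟩, ⟨w, rfl⟩, ?_, ?_, ?_, ?_, ?_⟩
      · simpa using hvw
      · simp [Set.union_singleton, Set.pair_comm]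
      · rintro s rfl t rfl
        exact hadj
      · rintro x rfl y rfl
        exact fun h => G.loopless.irrefl _ h
      · rintro x rfl y rfl
        exact fun h => G.loopless.irrefl _ h
    · intro W' hW' hsub
      exact hbic_sub W' hW' (hsub (Or.inl rfl)) (hsub (Or.inr rfl))
  have hmono : ρ v = ρ w → Mono ρ {v, w} := by
    intro h
    rintro x (rfl | hx) y (rfl | hy)
    · rfl
    · rw [hy]; exact h
    · rw [hx]; exact h.symm
    · rw [hx, hy]
  constructor
  · intro hSC heq
    exact hSC {v, w} hmaxstar (hmono heq)
  · intro hBC heq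
    exact hBC {v, w} hmaxbic (hmono heq)
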